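/- Let (L, [·,·], α, β) be a regular BiHom-Lie algebra. If D is an α^k β^l-derivation and D' is an α^s β^t-derivation (both commuting with α and β), then the commutator [D, D'] = D∘D' − D'∘D is an α^{k+s} β^{l+t}-derivation of L. -/

import Mathlib

section Aux
variable {K : Type*} [Field K] {L : Type*} [AddCommGroup L] [Module K L]

lemma aux_mul_apply (e₁ e₂ : L ≃ₗ[K] L) (x : L) : (e₁ * e₂) x = e₁ (e₂ x) := rfl

lemma aux_inv_apply (e : L ≃ₗ[K] L) (x : L) : e⁻¹ x = e.symm x := rfl

lemma aux_comm_zpow (f : L ≃ₗ[K] L) (D : L →ₗ[K] L)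
    (h : ∀ v, D (f v) = f (D v)) : ∀ (n : ℤ) (v : L), D ((f ^ n) v) = (f ^ n) (D v) := by
  have hinv : ∀ v, D (f⁻¹ v) = f⁻¹ (D v) := by
    intro v
    apply f.injective
    have := h (f⁻¹ v)
    simp only [aux_inv_apply] at *
    rw [f.apply_symm_apply] at this
    rw [← this, f.apply_symm_apply]
  intro n
  induction n using Int.induction_on with
  | zero => simp
  | succ n ih =>
      intro v
      rw [zpow_add_one]
      simp only [aux_mul_apply]
      rw [ih, h]
  | pred n ih =>
      intro v
      rw [show (-(n : ℤ) - 1) = (-(n : ℤ)) + (-1) by ring, zpow_add, zpow_neg_one]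
      simp only [aux_mul_apply, aux_inv_apply]
      rw [ih, show D (f.symm v) = f.symm (D v) from hinv v]

end Aux

/-- The commutator of an `αᵏβˡ`-derivation and an `αˢβᵗ`-derivation is an
`α^{k+s}β^{l+t}`-derivation. -/
theorem stmt_6 {K : Type*} [Field K] {L : Type*} [AddCommGroup L] [Module K L]
    (br : L →ₗ[K] L →ₗ[K] L) (α β : L ≃ₗ[K] L)
    (hcomm : ∀ a, α (β a) = β (α a))
    (hαm : ∀ a b, α (br a b) = br (α a) (α b))
    (hβm : ∀ a b, β (br a b) = br (β a) (β b))
    (hskew : ∀ a a', br (β a) (α a') = - br (β a') (α a))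
    (hjac : ∀ a a' a'', br (β (β a)) (br (β a') (α a''))
      + br (β (β a')) (br (β a'') (α a))
      + br (β (β a'')) (br (β a) (α a')) = 0)
    (k l s t : ℤ) (D D' : L →ₗ[K] L)
    (hDα : ∀ v, D (α v) = α (D v)) (hDβ : ∀ v, D (β v) = β (D v))
    (hD'α : ∀ v, D' (α v) = α (D' v)) (hD'β : ∀ v, D' (β v) = β (D' v))
    (hD : ∀ v w, D (br v w) = br (D v) ((α ^ k * β ^ l) w) + br ((α ^ k * β ^ l) v) (D w))
    (hD' : ∀ v w, D' (br v w) = br (D' v) ((α ^ s * β ^ t) w) + br ((α ^ s * β ^ t) v) (D' w))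
    (C : L → L) (hC : ∀ v, C v = D (D' v) - D' (D v)) :
    (∀ v, C (α v) = α (C v)) ∧ (∀ v, C (β v) = β (C v)) ∧
    (∀ v w, C (br v w) = br (C v) ((α ^ (k + s) * β ^ (l + t)) w)
      + br ((α ^ (k + s) * β ^ (l + t)) v) (C w)) := by
  have hab : Commute α β := by
    ext a; exact hcomm a
  refine ⟨?_, ?_, ?_⟩
  · intro v
    simp only [hC, hDα, hD'α, map_sub]
  · intro v
    simp only [hC, hDβ, hD'β, map_sub]
  · intro v w
    set P : L ≃ₗ[K] L := α ^ k * β ^ l with hP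
    set Q : L ≃ₗ[K] L := α ^ s * β ^ t with hQ
    have hPQ : P * Q = α ^ (k + s) * β ^ (l + t) := by
      rw [hP, hQ, zpow_add, zpow_add]
      have h2 : Commute (β ^ l) (α ^ s) := hab.symm.zpow_zpow l s
      rw [mul_assoc, ← mul_assoc (β ^ l), h2.eq, mul_assoc, ← mul_assoc]
    have hDQ : ∀ v, D (Q v) = Q (D v) := by
      intro v
      simp only [hQ, aux_mul_apply]
      rw [aux_comm_zpow α D hDα, aux_comm_zpow β D hDβ]
    have hD'P : ∀ v, D' (P v) = P (D' v) := by
      intro v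
      simp only [hP, aux_mul_apply]
      rw [aux_comm_zpow α D' hD'α, aux_comm_zpow β D' hD'β]
    have hcPQ : Commute P Q := by
      rw [hP, hQ]
      exact Commute.mul_left
        (Commute.mul_right ((Commute.refl α).zpow_zpow k s) (hab.zpow_zpow k t))
        (Commute.mul_right (hab.symm.zpow_zpow l s) ((Commute.refl β).zpow_zpow l t))
    have hPQcomm : ∀ v, Q (P v) = P (Q v) := by
      intro v
      have := DFunLike.congr_fun hcPQ.eq v
      simpa [aux_mul_apply] using this.symm
    rw [← hPQ]
    simp only [aux_mul_apply, hC, hD', hD, map_add, map_sub,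
      LinearMap.sub_apply, LinearMap.add_apply, hDQ, hD'P, hPQcomm]
    abel
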